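/- Every unit vector a ∈ ℂⁿ can be written, after multiplication by a suitable phase e^{iψ}, in the form cos(θ) u + i sin(θ) v, where u, v ∈ ℝⁿ satisfy |u| = |v| = 1, u·v = 0, and θ ∈ [0, π/4], except in the degenerate case where the imaginary part can be made zero (θ = 0, v arbitrary orthonormal completion). -/

import Mathlib

open Finset RealInnerProductSpace in
lemma exists_orthonormal_perp {n : ℕ} (hn : 2 ≤ n) (u : Fin n → ℝ) :
    ∃ v : Fin n → ℝ, (∑ i, v i ^ 2 = 1) ∧ (∑ i, u i * v i = 0) := by
  set U : EuclideanSpace ℝ (Fin n) := WithLp.toLp 2 u with hU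
  have hne : (ℝ ∙ U)ᗮ ≠ ⊥ := by
    intro h
    have h1 : Module.finrank ℝ (ℝ ∙ U) + Module.finrank ℝ (ℝ ∙ U)ᗮ = n := by
      rw [Submodule.finrank_add_finrank_orthogonal]
      simp [finrank_euclideanSpace_fin]
    have h2 : Module.finrank ℝ (ℝ ∙ U) ≤ 1 := by
      simpa using finrank_span_le_card (R := ℝ) ({U} : Set (EuclideanSpace ℝ (Fin n)))
    rw [h, finrank_bot] at h1
    omega
  obtain ⟨w, hw, hw0⟩ := Submodule.ne_bot_iff _ |>.mp hne
  set v : EuclideanSpace ℝ (Fin n) := ‖w‖⁻¹ • w with hv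
  have hnv : ‖v‖ = 1 := norm_smul_inv_norm hw0
  have hvmem : v ∈ (ℝ ∙ U)ᗮ := Submodule.smul_mem _ _ hw
  refine ⟨fun i => v i, ?_, ?_⟩
  · have h3 : (⟪v, v⟫ : ℝ) = 1 := by
      rw [real_inner_self_eq_norm_sq, hnv]; norm_num
    rw [PiLp.inner_apply] at h3
    simpa [pow_two] using h3
  · have h3 : (⟪U, v⟫ : ℝ) = 0 :=
      (Submodule.mem_orthogonal _ _).mp hvmem U (Submodule.mem_span_singleton_self U)
    rw [PiLp.inner_apply] at h3
    simpa [hU, mul_comm] using h3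

theorem canonical_form_unit_vector {n : ℕ} (hn : 2 ≤ n) (a : Fin n → ℂ)
    (ha : ∑ i, Complex.normSq (a i) = 1) :
    ∃ (ψ θ : ℝ) (u v : Fin n → ℝ),
      θ ∈ Set.Icc 0 (Real.pi / 4) ∧
      (∑ i, u i ^ 2 = 1) ∧ (∑ i, v i ^ 2 = 1) ∧ (∑ i, u i * v i = 0) ∧
      (∀ i, Complex.exp (Complex.I * ψ) * a i =
        Real.cos θ * u i + Complex.I * (Real.sin θ * v i)) := by
  classical
  set z : ℂ := ∑ i, (a i) ^ 2 with hzdef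
  set ψ : ℝ := -(z.arg) / 2 with hψ
  set b : Fin n → ℂ := fun i => Complex.exp (Complex.I * ψ) * a i with hbdef
  -- phase computation
  have e2 : Complex.exp (Complex.I * ψ) ^ 2 = Complex.exp (-(z.arg : ℂ) * Complex.I) := by
    rw [sq, ← Complex.exp_add]
    congr 1
    rw [hψ]
    push_cast
    ring
  have e3 : Complex.exp (-(z.arg : ℂ) * Complex.I) * z = ((‖z‖ : ℝ) : ℂ) := by
    have h := Complex.norm_mul_exp_arg_mul_I z
    calc Complex.exp (-(z.arg : ℂ) * Complex.I) * z
        = Complex.exp (-(z.arg : ℂ) * Complex.I) * (((‖z‖ : ℝ) : ℂ) *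
            Complex.exp ((z.arg : ℂ) * Complex.I)) := by rw [h]
      _ = ((‖z‖ : ℝ) : ℂ) *
            Complex.exp (-(z.arg : ℂ) * Complex.I + (z.arg : ℂ) * Complex.I) := by
          rw [Complex.exp_add]; ring
      _ = ((‖z‖ : ℝ) : ℂ) := by simp
  have hsum_sq : ∑ i, (b i) ^ 2 = ((‖z‖ : ℝ) : ℂ) := by
    simp only [hbdef, mul_pow, ← Finset.mul_sum]
    rw [← hzdef, e2, e3]
  have habs1 : ∀ i, Complex.normSq (b i) = Complex.normSq (a i) := by
    intro i
    rw [hbdef]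
    simp only [Complex.normSq_mul]
    have : ‖Complex.exp (Complex.I * ψ)‖ = 1 := by
      rw [mul_comm]
      exact Complex.norm_exp_ofReal_mul_I ψ
    rw [← Complex.sq_norm, this]
    norm_num
  have hb1 : ∑ i, ((b i).re ^ 2 + (b i).im ^ 2) = 1 := by
    rw [← ha]
    apply Finset.sum_congr rfl
    intro i _
    rw [← habs1 i, Complex.normSq_apply]
    ring
  set X : ℝ := ∑ i, (b i).re ^ 2 with hXdef
  set Y : ℝ := ∑ i, (b i).im ^ 2 with hYdef
  have hXY : X + Y = 1 := by
    rw [hXdef, hYdef, ← Finset.sum_add_distrib]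
    exact hb1
  have hre : X - Y = ‖z‖ := by
    have := congrArg Complex.re hsum_sq
    rw [Complex.re_sum] at this
    simp only [sq, Complex.mul_re, Complex.ofReal_re] at this
    rw [hXdef, hYdef, ← Finset.sum_sub_distrib]
    rw [← this]
    apply Finset.sum_congr rfl
    intro i _
    ring
  have him0 : ∑ i, (b i).re * (b i).im = 0 := by
    have := congrArg Complex.im hsum_sq
    rw [Complex.im_sum] at this
    simp only [sq, Complex.mul_im, Complex.ofReal_im] at this
    have h2 : ∑ i, ((b i).re * (b i).im + (b i).im * (b i).re) = 0 := this
    have h3 : ∑ i, ((b i).re * (b i).im + (b i).im * (b i).re)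
        = 2 * ∑ i, (b i).re * (b i).im := by
      rw [Finset.mul_sum]
      exact Finset.sum_congr rfl fun i _ => by ring
    rw [h3] at h2
    linarith
  have hY0 : 0 ≤ Y := Finset.sum_nonneg fun i _ => sq_nonneg _
  have hX0 : 0 ≤ X := Finset.sum_nonneg fun i _ => sq_nonneg _
  have hYhalf : Y ≤ 1 / 2 := by
    have : 0 ≤ X - Y := hre ▸ norm_nonneg z
    linarith
  have hXhalf : 1 / 2 ≤ X := by linarith
  have hsX : 0 < Real.sqrt X := Real.sqrt_pos.mpr (by linarith)
  set θ : ℝ := Real.arcsin (Real.sqrt Y) with hθdef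
  have hsY1 : Real.sqrt Y ≤ 1 := by
    rw [show (1:ℝ) = Real.sqrt 1 by simp]
    exact Real.sqrt_le_sqrt (by linarith)
  have hsin : Real.sin θ = Real.sqrt Y :=
    Real.sin_arcsin (by linarith [Real.sqrt_nonneg Y]) hsY1
  have hcos : Real.cos θ = Real.sqrt X := by
    rw [hθdef, Real.cos_arcsin, Real.sq_sqrt hY0]
    congr 1
    linarith
  have hθ0 : 0 ≤ θ := Real.arcsin_nonneg.mpr (Real.sqrt_nonneg Y)
  have hθ4 : θ ≤ Real.pi / 4 := by
    have h4 : Real.pi / 4 = Real.arcsin (Real.sqrt (1/2)) := by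
      rw [show Real.sqrt (1/2) = Real.sqrt 2 / 2 by
        rw [show (1/2:ℝ) = (Real.sqrt 2 / 2)^2 by
          rw [div_pow, Real.sq_sqrt] <;> norm_num]
        exact Real.sqrt_sq (by positivity)]
      rw [← Real.sin_pi_div_four,
        Real.arcsin_sin (by linarith [Real.pi_pos]) (by linarith [Real.pi_pos])]
    rw [h4, hθdef]
    exact Real.monotone_arcsin (Real.sqrt_le_sqrt hYhalf)
  set u : Fin n → ℝ := fun i => (b i).re / Real.sqrt X with hudef
  have hu1 : ∑ i, u i ^ 2 = 1 := by
    simp only [hudef, div_pow, ← Finset.sum_div]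
    rw [← hXdef, Real.sq_sqrt hX0, div_self (by linarith)]
  have hx : ∀ i, Real.cos θ * u i = (b i).re := by
    intro i
    rw [hcos, hudef]
    field_simp
  -- construct v
  have hv : ∃ v : Fin n → ℝ, (∑ i, v i ^ 2 = 1) ∧ (∑ i, u i * v i = 0) ∧
      ∀ i, Real.sin θ * v i = (b i).im := by
    by_cases hYz : Y = 0
    · obtain ⟨v, hv1, hv2⟩ := exists_orthonormal_perp hn u
      refine ⟨v, hv1, hv2, fun i => ?_⟩
      have hyi : (b i).im = 0 := by
        have := (Finset.sum_eq_zero_iff_of_nonneg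
          (fun i _ => sq_nonneg ((b i).im))).mp (hYdef ▸ hYz) i (Finset.mem_univ i)
        exact pow_eq_zero_iff (by norm_num) |>.mp this
      rw [hsin, hyi, hYz, Real.sqrt_zero, zero_mul]
    · have hYpos : 0 < Y := lt_of_le_of_ne hY0 (Ne.symm hYz)
      have hsYpos : 0 < Real.sqrt Y := Real.sqrt_pos.mpr hYpos
      refine ⟨fun i => (b i).im / Real.sqrt Y, ?_, ?_, fun i => ?_⟩
      · simp only [div_pow, ← Finset.sum_div]
        rw [← hYdef, Real.sq_sqrt hY0, div_self (by linarith)]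
      · simp only [hudef, div_mul_div_comm, ← Finset.sum_div]
        rw [him0, zero_div]
      · rw [hsin]
        field_simp
  obtain ⟨v, hv1, hv2, hy⟩ := hv
  refine ⟨ψ, θ, u, v, ⟨hθ0, hθ4⟩, hu1, hv1, hv2, fun i => ?_⟩
  show b i = _
  rw [← Complex.re_add_im (b i), ← hx i, ← hy i]
  push_cast
  ring
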